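/- Interpolation error for subinterval averages (scalar Poincaré version): for v ∈ W^{s,p}(0,T) with s ∈ (1/p,1], p ∈ (1,∞), t_n = nτ, Nτ = T, and v̄^n = τ^{-1}∫_{t_{n-1}}^{t_n} v, there holds (τ Σ_{n=1}^N |v(t_n) − v̄^n|^p)^{1/p} ≤ c τ^s |v|_{W^{s,p}(0,T)}, where |·|_{W^{s,p}} is the Gagliardo seminorm. -/

import Mathlib

open Real MeasureTheory Finset

lemma gag_nonneg (s p : ℝ) (v : ℝ → ℝ) (q : ℝ × ℝ) :
    0 ≤ |v q.1 - v q.2| ^ p / |q.1 - q.2| ^ (1 + p * s) :=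
  div_nonneg (rpow_nonneg (abs_nonneg _) _) (rpow_nonneg (abs_nonneg _) _)

lemma calc_aux (p s h A : ℝ) (hp0 : 0 < p) (hh : 0 < h) (hA : 0 < A) (k : ℕ) :
    ((h / 2 ^ k) ^ (1 + p * s) * A) ^ (1 / p) * ((h / 2 ^ k) * (h / 2 ^ k / 2)) ^ (1 - 1 / p)
        / ((h / 2 ^ k) * (h / 2 ^ k / 2))
      = 2 ^ (1 / p) * A ^ (1 / p) * h ^ (s - 1 / p) * ((2 : ℝ) ^ (1 / p - s)) ^ k := by
  have hx : (0 : ℝ) < h / 2 ^ k := div_pos hh (by positivity)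
  have hL : (0 : ℝ) < ((h / 2 ^ k) ^ (1 + p * s) * A) ^ (1 / p)
      * ((h / 2 ^ k) * (h / 2 ^ k / 2)) ^ (1 - 1 / p) / ((h / 2 ^ k) * (h / 2 ^ k / 2)) := by
    have h1 : (0:ℝ) < (h / 2 ^ k) ^ (1 + p * s) := rpow_pos_of_pos hx _
    positivity
  have hR : (0 : ℝ) < 2 ^ (1 / p) * A ^ (1 / p) * h ^ (s - 1 / p) * ((2 : ℝ) ^ (1 / p - s)) ^ k := by
    have : (0:ℝ) < (2:ℝ) ^ (1/p - s) := rpow_pos_of_pos two_pos _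
    positivity
  rw [← Real.exp_log hL, ← Real.exp_log hR]
  congr 1
  have hxy : (0:ℝ) < (h / 2 ^ k) * (h / 2 ^ k / 2) := by positivity
  rw [Real.log_div (by positivity) (ne_of_gt hxy),
    Real.log_mul (by positivity) (by positivity),
    Real.log_rpow (by positivity), Real.log_rpow hxy,
    Real.log_mul (ne_of_gt hx) (by positivity),
    Real.log_mul (ne_of_gt (rpow_pos_of_pos hx _)) (ne_of_gt hA),
    Real.log_rpow hx, Real.log_div (ne_of_gt hx) two_ne_zero,
    Real.log_div (ne_of_gt hh) (by positivity), Real.log_pow,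
    Real.log_mul (by positivity) (by positivity)]
  have l1 : Real.log ((2:ℝ) ^ (1 / p) * A ^ (1 / p) * h ^ (s - 1 / p))
      = 1/p * Real.log 2 + 1/p * Real.log A + (s - 1/p) * Real.log h := by
    rw [Real.log_mul (by positivity) (by positivity),
      Real.log_mul (ne_of_gt (rpow_pos_of_pos two_pos _)) (ne_of_gt (rpow_pos_of_pos hA _)),
      Real.log_rpow two_pos, Real.log_rpow hA, Real.log_rpow hh]
  have l3 : Real.log (((2:ℝ) ^ (1 / p - s)) ^ k) = (k : ℝ) * ((1/p - s) * Real.log 2) := by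
    rw [Real.log_pow, Real.log_rpow two_pos]
  rw [l1, l3]
  field_simp
  ring

lemma poincare (s p : ℝ) (hp : 1 < p) (hs1 : 1 / p < s) (hs2 : s < 1)
    (a b : ℝ) (hab : a < b) (v : ℝ → ℝ)
    (hv : ContinuousOn v (Set.Icc a b))
    (hf : IntegrableOn (fun q : ℝ × ℝ => |v q.1 - v q.2| ^ p / |q.1 - q.2| ^ (1 + p * s))
        (Set.Ioc a b ×ˢ Set.Ioc a b)) :
    |v b - (1 / (b - a)) * ∫ t in Set.Ioc a b, v t| ≤
      (2 : ℝ) ^ (1 / p) / (1 - 2 ^ (1 / p - s)) * (b - a) ^ (s - 1 / p) *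
        (∫ q in Set.Ioc a b ×ˢ Set.Ioc a b,
          |v q.1 - v q.2| ^ p / |q.1 - q.2| ^ (1 + p * s)) ^ (1 / p) := by
  have hp0 : (0:ℝ) < p := lt_trans one_pos hp
  set f : ℝ × ℝ → ℝ := fun q => |v q.1 - v q.2| ^ p / |q.1 - q.2| ^ (1 + p * s) with hfdef
  set A : ℝ := ∫ q in Set.Ioc a b ×ˢ Set.Ioc a b, f q with hAdef
  have hA0 : 0 ≤ A := integral_nonneg fun q => gag_nonneg s p v q
  set h : ℝ := b - a with hhdef
  have hh : 0 < h := sub_pos.mpr hab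
  set ℓ : ℕ → ℝ := fun k => h / 2 ^ k with hldef
  have hℓpos : ∀ k, 0 < ℓ k := fun k => div_pos hh (by positivity)
  have hℓle : ∀ k, ℓ k ≤ h := fun k =>
    div_le_self hh.le (one_le_pow₀ one_le_two)
  set J : ℕ → Set ℝ := fun k => Set.Ioc (b - ℓ k) b with hJdef
  have hJsub : ∀ k, J k ⊆ Set.Ioc a b := fun k =>
    Set.Ioc_subset_Ioc (by simp only [hhdef] at hℓle ⊢; linarith [hℓle k]) le_rfl
  have hJIcc : ∀ k, J k ⊆ Set.Icc a b := fun k => (hJsub k).trans Set.Ioc_subset_Icc_self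
  have hvi : IntegrableOn v (Set.Icc a b) := hv.integrableOn_Icc
  have hvik : ∀ k, IntegrableOn v (J k) := fun k => hvi.mono_set (hJIcc k)
  have hvolJ : ∀ k, volume (J k) = ENNReal.ofReal (ℓ k) := by
    intro k; rw [hJdef]; simp [Real.volume_Ioc]
  set g : ℕ → ℝ := fun k => (1 / ℓ k) * ∫ t in J k, v t with hgdef
  -- convergence of averages to v b
  have hgk : ∀ k, g k - v b = (1 / ℓ k) * ∫ t in J k, (v t - v b) := by
    intro k
    rw [integral_sub (hvik k) (integrableOn_const (by rw [hvolJ k]; exact ENNReal.ofReal_ne_top))]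
    rw [setIntegral_const, measureReal_def, hvolJ k, ENNReal.toReal_ofReal (hℓpos k).le, smul_eq_mul]
    rw [hgdef]
    dsimp only
    have hne := (hℓpos k).ne'
    field_simp
  have htend : Filter.Tendsto g Filter.atTop (nhds (v b)) := by
    rw [Metric.tendsto_atTop]
    intro ε hε
    have hcb : ContinuousWithinAt v (Set.Icc a b) b := hv b ⟨hab.le, le_rfl⟩
    rw [Metric.continuousWithinAt_iff] at hcb
    obtain ⟨δ, hδ0, hδ⟩ := hcb (ε / 2) (by linarith)
    obtain ⟨K, hK⟩ := pow_unbounded_of_one_lt (h / δ) (one_lt_two (α := ℝ))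
    refine ⟨K, fun k hk => ?_⟩
    have hℓK : ℓ k < δ := by
      have h1 : ℓ k ≤ ℓ K := by
        have h2k : (2:ℝ) ^ K ≤ 2 ^ k := pow_le_pow_right₀ one_le_two hk
        rw [hldef]; dsimp only
        gcongr
      have h2 : ℓ K < δ := by
        rw [hldef]; dsimp only
        rw [div_lt_iff₀ (by positivity)]
        calc h = h / δ * δ := by field_simp
        _ < 2 ^ K * δ := by gcongr
        _ = δ * 2 ^ K := by ring
      linarith
    have hb2 : ∀ t ∈ J k, |v t - v b| ≤ ε / 2 := by
      intro t ht
      have h1 : dist t b < δ := by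
        rw [Real.dist_eq, abs_lt]
        constructor
        · have := ht.1; linarith
        · have := ht.2; linarith
      exact le_of_lt (hδ (hJIcc k ht) h1)
    have hbound : |∫ t in J k, (v t - v b)| ≤ ℓ k * (ε / 2) := by
      calc |∫ t in J k, (v t - v b)| ≤ ∫ t in J k, |v t - v b| := by
            simpa [Real.norm_eq_abs] using
              norm_integral_le_integral_norm (μ := volume.restrict (J k)) (fun t => v t - v b)
      _ ≤ ∫ _ in J k, (ε / 2) := by
            refine setIntegral_mono_on ((hvik k).sub (integrableOn_const
              (by rw [hvolJ k]; exact ENNReal.ofReal_ne_top))).abs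
              (integrableOn_const (by rw [hvolJ k]; exact ENNReal.ofReal_ne_top))
              measurableSet_Ioc hb2
      _ = ℓ k * (ε / 2) := by
            rw [setIntegral_const, measureReal_def, hvolJ k, ENNReal.toReal_ofReal (hℓpos k).le, smul_eq_mul]
    have : dist (g k) (v b) ≤ ε / 2 := by
      rw [Real.dist_eq, hgk k, abs_mul, abs_of_pos (by positivity : (0:ℝ) < 1 / ℓ k)]
      calc 1 / ℓ k * |∫ t in J k, (v t - v b)| ≤ 1 / ℓ k * (ℓ k * (ε / 2)) := by
            gcongr
      _ = ε / 2 := by rw [one_div, inv_mul_cancel_left₀ (hℓpos k).ne']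
    linarith
  -- geometric estimate
  have hs0 : (0:ℝ) < s := lt_trans (by positivity) hs1
  have hps0 : (0:ℝ) < 1 + p * s := by nlinarith [mul_pos hp0 hs0]
  have key : ∀ k, dist (g k) (g (k + 1)) ≤
      (2 ^ (1/p) * A ^ (1/p) * h ^ (s - 1/p)) * ((2:ℝ) ^ (1/p - s)) ^ k := by
    intro k
    have hl' : ℓ (k+1) = ℓ k / 2 := by
      rw [hldef]; dsimp only; rw [pow_succ]; ring
    have hle' : ℓ (k+1) ≤ ℓ k := by rw [hl']; linarith [hℓpos k]
    have hJ' : J (k+1) ⊆ J k := by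
      rw [hJdef]; exact Set.Ioc_subset_Ioc (by linarith) le_rfl
    set E : Set (ℝ × ℝ) := J k ×ˢ J (k+1) with hEdef
    have hEm : MeasurableSet E := measurableSet_Ioc.prod measurableSet_Ioc
    have hEsub : E ⊆ Set.Ioc a b ×ˢ Set.Ioc a b := Set.prod_mono (hJsub k) (hJsub (k+1))
    have hvolE : volume E = ENNReal.ofReal (ℓ k) * ENNReal.ofReal (ℓ (k+1)) := by
      rw [hEdef, Measure.volume_eq_prod, Measure.prod_prod, hvolJ k, hvolJ (k+1)]
    have hEtoReal : (volume E).toReal = ℓ k * ℓ (k+1) := by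
      rw [hvolE, ENNReal.toReal_mul, ENNReal.toReal_ofReal (hℓpos k).le,
        ENNReal.toReal_ofReal (hℓpos (k+1)).le]
    have hEfin : volume E < ⊤ := by
      rw [hvolE]; exact ENNReal.mul_lt_top ENNReal.ofReal_lt_top ENNReal.ofReal_lt_top
    haveI hfinE : IsFiniteMeasure (volume.restrict E) := ⟨by rwa [Measure.restrict_apply_univ]⟩
    set G : ℝ × ℝ → ℝ := fun q => v q.1 - v q.2 with hGdef
    have hGc : ContinuousOn G (Set.Icc a b ×ˢ Set.Icc a b) := by
      apply ContinuousOn.sub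
      · exact hv.comp continuous_fst.continuousOn fun q hq => hq.1
      · exact hv.comp continuous_snd.continuousOn fun q hq => hq.2
    have hEsubI : E ⊆ Set.Icc a b ×ˢ Set.Icc a b :=
      hEsub.trans (Set.prod_mono Set.Ioc_subset_Icc_self Set.Ioc_subset_Icc_self)
    have hGm : AEStronglyMeasurable G (volume.restrict E) :=
      (hGc.mono hEsubI).aestronglyMeasurable hEm
    obtain ⟨M, hM⟩ := isCompact_Icc.exists_bound_of_continuousOn hv
    have hGb : ∀ᵐ q ∂(volume.restrict E), ‖G q‖ ≤ M + M := by
      filter_upwards [ae_restrict_mem hEm] with q hq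
      have h1 := hM q.1 (hJIcc k hq.1)
      have h2 := hM q.2 (hJIcc (k+1) hq.2)
      calc ‖G q‖ ≤ ‖v q.1‖ + ‖v q.2‖ := norm_sub_le _ _
      _ ≤ M + M := add_le_add h1 h2
    have hGLp : MemLp G (ENNReal.ofReal p) (volume.restrict E) :=
      MemLp.of_bound hGm (M + M) hGb
    have hGint : IntegrableOn G E := memLp_one_iff_integrable.mp
      (hGLp.mono_exponent (by rw [ENNReal.one_le_ofReal]; exact hp.le))
    have hconst : ∀ m : ℕ, IntegrableOn (fun _ : ℝ => v b) (J m) := fun m =>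
      integrableOn_const (by rw [hvolJ m]; exact ENNReal.ofReal_ne_top)
    -- identity
    have hid : ∫ q in E, G q = ℓ (k+1) * (∫ t in J k, v t) - ℓ k * ∫ t in J (k+1), v t := by
      rw [hEdef] at hGint ⊢
      rw [Measure.volume_eq_prod] at hGint ⊢
      rw [setIntegral_prod _ hGint]
      have inner : ∀ x : ℝ, (∫ y in J (k+1), G (x, y)) = ℓ (k+1) * v x - ∫ y in J (k+1), v y := by
        intro x
        rw [hGdef]
        dsimp only
        rw [integral_sub (integrableOn_const (C := v x)
            (by rw [hvolJ (k+1)]; exact ENNReal.ofReal_ne_top)) (hvik (k+1)),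
          setIntegral_const, measureReal_def, hvolJ (k+1), ENNReal.toReal_ofReal (hℓpos (k+1)).le, smul_eq_mul]
      simp only [inner]
      rw [integral_sub ((hvik k).const_mul _) (integrableOn_const
          (by rw [hvolJ k]; exact ENNReal.ofReal_ne_top)),
        integral_const_mul, setIntegral_const, measureReal_def, hvolJ k,
        ENNReal.toReal_ofReal (hℓpos k).le, smul_eq_mul]
    have hdist_eq : dist (g k) (g (k+1)) = |∫ q in E, G q| / (ℓ k * ℓ (k+1)) := by
      rw [Real.dist_eq]
      have heq : g k - g (k+1) = (∫ q in E, G q) / (ℓ k * ℓ (k+1)) := by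
        rw [hid, hgdef]
        dsimp only
        have h1 := (hℓpos k).ne'
        have h2 := (hℓpos (k+1)).ne'
        field_simp
      rw [heq, abs_div, abs_of_pos (by positivity : (0:ℝ) < ℓ k * ℓ (k+1))]
    -- p-integral bound
    have hGp_int : Integrable (fun q => |G q| ^ p) (volume.restrict E) := by
      have := hGLp.integrable_norm_rpow (by simp [hp0]) ENNReal.ofReal_ne_top
      simpa [ENNReal.toReal_ofReal hp0.le, Real.norm_eq_abs] using this
    have hpeq : ∀ q : ℝ × ℝ, |G q| ^ p = f q * |q.1 - q.2| ^ (1 + p * s) := by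
      intro q
      by_cases hq : q.1 = q.2
      · rw [hGdef, hfdef]
        dsimp only
        rw [hq]
        simp [Real.zero_rpow hp0.ne', Real.zero_rpow hps0.ne']
      · rw [hGdef, hfdef]
        dsimp only
        rw [div_mul_cancel₀]
        exact (rpow_pos_of_pos (abs_pos.mpr (sub_ne_zero.mpr hq)) _).ne'
    have hw_le : ∀ q ∈ E, |q.1 - q.2| ^ (1 + p*s) ≤ (ℓ k) ^ (1 + p*s) := by
      intro q hq
      apply rpow_le_rpow (abs_nonneg _) _ hps0.le
      have hq1 : q.1 ∈ J k := hq.1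
      have hq2 : q.2 ∈ J k := hJ' hq.2
      simp only [hJdef, Set.mem_Ioc] at hq1 hq2
      rw [abs_le]
      constructor
      · have := hq1.2; have := hq2.1; linarith
      · have := hq1.1; have := hq2.2; linarith
    have hfE : IntegrableOn f E := hf.mono_set hEsub
    have hfeqG : (fun q : ℝ × ℝ => f q * |q.1 - q.2| ^ (1 + p*s)) = fun q => |G q| ^ p := by
      funext q; rw [hpeq q]
    have hInt1 : IntegrableOn (fun q : ℝ × ℝ => f q * |q.1 - q.2| ^ (1 + p*s)) E := by
      rw [hfeqG]; exact hGp_int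
    have hIp : ∫ q in E, |G q| ^ p ≤ (ℓ k) ^ (1 + p*s) * A := by
      calc ∫ q in E, |G q| ^ p = ∫ q in E, f q * |q.1 - q.2| ^ (1 + p*s) := by
            rw [hfeqG]
      _ ≤ ∫ q in E, f q * (ℓ k) ^ (1+p*s) :=
            setIntegral_mono_on hInt1 (hfE.mul_const _) hEm
              (fun q hq => mul_le_mul_of_nonneg_left (hw_le q hq) (by
                rw [hfdef]; exact gag_nonneg s p v q))
      _ = (∫ q in E, f q) * (ℓ k) ^ (1+p*s) := integral_mul_const _ _
      _ ≤ A * (ℓ k) ^ (1+p*s) := by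
            apply mul_le_mul_of_nonneg_right _ (rpow_nonneg (hℓpos k).le _)
            rw [hAdef]
            exact setIntegral_mono_set hf
              (Filter.Eventually.of_forall fun q => by rw [hfdef]; exact gag_nonneg s p v q)
              (HasSubset.Subset.eventuallyLE hEsub)
      _ = (ℓ k) ^ (1+p*s) * A := mul_comm _ _
    -- Hölder
    have hq' : p.HolderConjugate (p / (p-1)) := Real.HolderConjugate.conjExponent hp
    have hexp : 1 / (p / (p - 1)) = 1 - 1/p := by
      rw [one_div_div]
      field_simp
    have hHolder : ∫ q in E, |G q| ≤ (∫ q in E, |G q| ^ p) ^ (1/p) * (ℓ k * ℓ (k+1)) ^ (1 - 1/p) := by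
      have h1 : MemLp (fun q => |G q|) (ENNReal.ofReal p) (volume.restrict E) := by
        simpa [Real.norm_eq_abs] using hGLp.norm
      have h2 : MemLp (fun _ : ℝ×ℝ => (1:ℝ)) (ENNReal.ofReal (p/(p-1))) (volume.restrict E) :=
        memLp_const 1
      have hin := integral_mul_le_Lp_mul_Lq_of_nonneg hq'
        (Filter.Eventually.of_forall fun q => abs_nonneg (G q))
        (Filter.Eventually.of_forall fun _ => zero_le_one) h1 h2
      simp only [mul_one, Real.one_rpow] at hin
      rw [setIntegral_const, measureReal_def, smul_eq_mul, mul_one, hEtoReal, hexp] at hin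
      exact hin
    -- combine
    have habs : |∫ q in E, G q| ≤ ((ℓ k)^(1+p*s) * A) ^ (1/p) * (ℓ k * ℓ (k+1)) ^ (1 - 1/p) := by
      calc |∫ q in E, G q| ≤ ∫ q in E, |G q| := by
            simpa [Real.norm_eq_abs] using
              norm_integral_le_integral_norm (μ := volume.restrict E) G
      _ ≤ (∫ q in E, |G q| ^ p) ^ (1/p) * (ℓ k * ℓ (k+1)) ^ (1-1/p) := hHolder
      _ ≤ ((ℓ k)^(1+p*s) * A) ^ (1/p) * (ℓ k * ℓ (k+1)) ^ (1-1/p) := by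
            apply mul_le_mul_of_nonneg_right _ (rpow_nonneg (by positivity) _)
            apply rpow_le_rpow _ hIp (by positivity)
            exact integral_nonneg fun q => rpow_nonneg (abs_nonneg _) _
    rw [hdist_eq]
    rcases eq_or_lt_of_le hA0 with hA|hA
    · have hz : A = 0 := hA.symm
      have h1 : ∫ q in E, |G q| ^ p = 0 := by
        apply le_antisymm
        · calc ∫ q in E, |G q| ^ p ≤ (ℓ k) ^ (1+p*s) * A := hIp
          _ = 0 := by rw [hz, mul_zero]
        · exact integral_nonneg fun q => rpow_nonneg (abs_nonneg _) _
      have h2 : |∫ q in E, G q| = 0 := by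
        apply le_antisymm _ (abs_nonneg _)
        calc |∫ q in E, G q| ≤ ((ℓ k)^(1+p*s) * A) ^ (1/p) * (ℓ k * ℓ (k+1)) ^ (1 - 1/p) := habs
        _ = 0 := by
              rw [hz, mul_zero, Real.zero_rpow (one_div_ne_zero hp0.ne'), zero_mul]
      rw [h2, zero_div, hz]
      have : ((2:ℝ):ℝ) ^ (1/p) * (0:ℝ) ^ (1/p) * h ^ (s - 1/p) * ((2:ℝ) ^ (1/p-s)) ^ k = 0 := by
        rw [Real.zero_rpow (one_div_ne_zero hp0.ne')]
        ring
      rw [this]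
    · calc |∫ q in E, G q| / (ℓ k * ℓ (k+1)) ≤
          ((ℓ k)^(1+p*s) * A) ^ (1/p) * (ℓ k * ℓ (k+1)) ^ (1 - 1/p) / (ℓ k * ℓ (k+1)) := by
            have hlkpos : (0:ℝ) < ℓ k * ℓ (k+1) := mul_pos (hℓpos k) (hℓpos (k+1))
            exact div_le_div_of_nonneg_right habs hlkpos.le
      _ = 2 ^ (1/p) * A ^ (1/p) * h ^ (s - 1/p) * ((2:ℝ) ^ (1/p-s)) ^ k := by
            have := calc_aux p s h A hp0 hh hA k
            rw [hl']
            rw [hldef]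
            dsimp only
            exact this
  -- conclude
  have hr1 : (2:ℝ) ^ (1/p - s) < 1 :=
    rpow_lt_one_of_one_lt_of_neg one_lt_two (by linarith)
  have hfinal := dist_le_of_le_geometric_of_tendsto₀ _ _ hr1 key htend
  have hg0 : g 0 = (1/(b-a)) * ∫ t in Set.Ioc a b, v t := by
    rw [hgdef]
    dsimp only
    have hJ0 : J 0 = Set.Ioc a b := by
      rw [hJdef, hldef]
      dsimp only
      norm_num [hhdef]
    have hl0 : ℓ 0 = b - a := by rw [hldef]; dsimp only; norm_num [hhdef]
    rw [hJ0, hl0]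
  calc |v b - (1/(b-a)) * ∫ t in Set.Ioc a b, v t| = dist (g 0) (v b) := by
        rw [Real.dist_eq, hg0, abs_sub_comm]
  _ ≤ 2 ^ (1/p) * A ^ (1/p) * h ^ (s - 1/p) / (1 - 2 ^ (1/p - s)) := hfinal
  _ = 2 ^ (1/p) / (1 - 2 ^ (1/p - s)) * h ^ (s - 1/p) * A ^ (1/p) := by ring

theorem stmt_15 (s p : ℝ) (hp : 1 < p) (hs1 : 1 / p < s) (hs2 : s < 1) :
    ∃ c > 0, ∀ (T : ℝ) (N : ℕ) (τ : ℝ) (v : ℝ → ℝ),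
      0 < T → 0 < N → τ = T / N →
      ContinuousOn v (Set.Icc 0 T) →
      IntegrableOn (fun q : ℝ × ℝ => |v q.1 - v q.2| ^ p / |q.1 - q.2| ^ (1 + p * s))
        (Set.Ioc 0 T ×ˢ Set.Ioc 0 T) →
      (τ * ∑ n ∈ Finset.Icc 1 N,
          |v ((n : ℝ) * τ) -
            (1 / τ) * ∫ t in Set.Ioc (((n : ℝ) - 1) * τ) ((n : ℝ) * τ), v t| ^ p) ^ (1 / p) ≤
        c * τ ^ s *
          (∫ q in Set.Ioc 0 T ×ˢ Set.Ioc 0 T,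
            |v q.1 - v q.2| ^ p / |q.1 - q.2| ^ (1 + p * s)) ^ (1 / p) := by
  have hp0 : (0:ℝ) < p := lt_trans one_pos hp
  have hr1 : (2:ℝ) ^ (1/p - s) < 1 :=
    rpow_lt_one_of_one_lt_of_neg one_lt_two (by linarith)
  set c : ℝ := (2:ℝ) ^ (1/p) / (1 - 2 ^ (1/p - s)) with hcdef
  have hc0 : 0 < c := div_pos (rpow_pos_of_pos two_pos _) (by linarith)
  refine ⟨c, hc0, fun T N τ v hT hN hτ hv hint => ?_⟩
  have hNR : (0:ℝ) < N := Nat.cast_pos.mpr hN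
  have hτ0 : 0 < τ := by rw [hτ]; positivity
  have hNτ : (N:ℝ) * τ = T := by rw [hτ]; field_simp
  set f : ℝ × ℝ → ℝ := fun q => |v q.1 - v q.2| ^ p / |q.1 - q.2| ^ (1 + p * s) with hfdef
  set A : ℝ := ∫ q in Set.Ioc 0 T ×ˢ Set.Ioc 0 T, f q with hAdef
  have hA0 : 0 ≤ A := integral_nonneg fun q => gag_nonneg s p v q
  set In : ℕ → Set (ℝ × ℝ) := fun n =>
    Set.Ioc (((n:ℝ)-1)*τ) ((n:ℝ)*τ) ×ˢ Set.Ioc (((n:ℝ)-1)*τ) ((n:ℝ)*τ) with hIndef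
  have hsub : ∀ n ∈ Finset.Icc 1 N, Set.Ioc (((n:ℝ)-1)*τ) ((n:ℝ)*τ) ⊆ Set.Ioc 0 T := by
    intro n hn
    rw [Finset.mem_Icc] at hn
    have h1 : (1:ℝ) ≤ (n:ℝ) := by exact_mod_cast hn.1
    have h2 : (n:ℝ) ≤ (N:ℝ) := by exact_mod_cast hn.2
    apply Set.Ioc_subset_Ioc
    · nlinarith
    · nlinarith
  have hterm : ∀ n ∈ Finset.Icc 1 N,
      |v ((n:ℝ)*τ) - (1/τ) * ∫ t in Set.Ioc (((n:ℝ)-1)*τ) ((n:ℝ)*τ), v t| ^ p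
        ≤ c ^ p * τ ^ (p*s - 1) * ∫ q in In n, f q := by
    intro n hn
    have hab : ((n:ℝ)-1)*τ < (n:ℝ)*τ := by nlinarith
    have hIccsub : Set.Icc (((n:ℝ)-1)*τ) ((n:ℝ)*τ) ⊆ Set.Icc 0 T := by
      rw [Finset.mem_Icc] at hn
      have h1 : (1:ℝ) ≤ (n:ℝ) := by exact_mod_cast hn.1
      have h2 : (n:ℝ) ≤ (N:ℝ) := by exact_mod_cast hn.2
      apply Set.Icc_subset_Icc
      · nlinarith
      · nlinarith
    have hpoin := poincare s p hp hs1 hs2 (((n:ℝ)-1)*τ) ((n:ℝ)*τ) hab v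
      (hv.mono hIccsub)
      (hint.mono_set (Set.prod_mono (hsub n hn) (hsub n hn)))
    have hba : (n:ℝ)*τ - ((n:ℝ)-1)*τ = τ := by ring
    rw [hba] at hpoin
    have hAn0 : 0 ≤ ∫ q in In n, f q := integral_nonneg fun q => gag_nonneg s p v q
    have hrphs : 0 ≤ c * τ ^ (s - 1/p) * (∫ q in In n, f q) ^ (1/p) := by
      have := rpow_nonneg hτ0.le (s - 1/p)
      have := rpow_nonneg hAn0 (1/p)
      positivity
    calc |v ((n:ℝ)*τ) - (1/τ) * ∫ t in Set.Ioc (((n:ℝ)-1)*τ) ((n:ℝ)*τ), v t| ^ p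
        ≤ (c * τ ^ (s - 1/p) * (∫ q in In n, f q) ^ (1/p)) ^ p := by
          apply rpow_le_rpow (abs_nonneg _) _ hp0.le
          exact hpoin
    _ = c ^ p * τ ^ (p*s - 1) * ∫ q in In n, f q := by
          rw [Real.mul_rpow (by positivity) (rpow_nonneg hAn0 _),
            Real.mul_rpow hc0.le (rpow_nonneg hτ0.le _),
            ← Real.rpow_mul hτ0.le, ← Real.rpow_mul hAn0]
          have e1 : (s - 1/p) * p = p*s - 1 := by field_simp
          have e2 : 1/p * p = 1 := by field_simp
          rw [e1, e2, Real.rpow_one]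
  have hdisj : (↑(Finset.Icc 1 N) : Set ℕ).Pairwise (Function.onFun Disjoint In) := by
    intro m _ n _ hmn
    have key : ∀ m' n' : ℕ, m' < n' → Disjoint (In m') (In n') := by
      intro m' n' hlt
      have h1 : (m':ℝ) ≤ (n':ℝ) - 1 := by
        have : (m':ℝ) + 1 ≤ (n':ℝ) := by exact_mod_cast hlt
        linarith
      have hd : Disjoint (Set.Ioc (((m':ℝ)-1)*τ) ((m':ℝ)*τ)) (Set.Ioc (((n':ℝ)-1)*τ) ((n':ℝ)*τ)) := by
        rw [Set.Ioc_disjoint_Ioc]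
        calc min ((m':ℝ)*τ) ((n':ℝ)*τ) ≤ (m':ℝ)*τ := min_le_left _ _
        _ ≤ ((n':ℝ)-1)*τ := by nlinarith
        _ ≤ max (((m':ℝ)-1)*τ) (((n':ℝ)-1)*τ) := le_max_right _ _
      exact Set.disjoint_prod.mpr (Or.inl hd)
    rcases lt_or_gt_of_ne hmn with h|h
    · exact key m n h
    · exact (key n m h).symm
  have hsum : ∑ n ∈ Finset.Icc 1 N, ∫ q in In n, f q ≤ A := by
    rw [← MeasureTheory.integral_biUnion_finset (Finset.Icc 1 N)
      (fun n _ => measurableSet_Ioc.prod measurableSet_Ioc) hdisj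
      (fun n hn => hint.mono_set (Set.prod_mono (hsub n hn) (hsub n hn)))]
    apply setIntegral_mono_set hint
      (Filter.Eventually.of_forall fun q => gag_nonneg s p v q)
    apply HasSubset.Subset.eventuallyLE
    exact Set.iUnion₂_subset fun n hn => Set.prod_mono (hsub n hn) (hsub n hn)
  have hLHS : τ * ∑ n ∈ Finset.Icc 1 N,
      |v ((n:ℝ)*τ) - (1/τ) * ∫ t in Set.Ioc (((n:ℝ)-1)*τ) ((n:ℝ)*τ), v t| ^ p
        ≤ c ^ p * τ ^ (p*s) * A := by
    calc τ * ∑ n ∈ Finset.Icc 1 N,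
        |v ((n:ℝ)*τ) - (1/τ) * ∫ t in Set.Ioc (((n:ℝ)-1)*τ) ((n:ℝ)*τ), v t| ^ p
        ≤ τ * ∑ n ∈ Finset.Icc 1 N, c ^ p * τ ^ (p*s - 1) * ∫ q in In n, f q := by
          apply mul_le_mul_of_nonneg_left (Finset.sum_le_sum hterm) hτ0.le
    _ = c ^ p * (τ * τ ^ (p*s - 1)) * ∑ n ∈ Finset.Icc 1 N, ∫ q in In n, f q := by
          rw [← Finset.mul_sum]; ring
    _ = c ^ p * τ ^ (p*s) * ∑ n ∈ Finset.Icc 1 N, ∫ q in In n, f q := by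
          congr 2
          calc τ * τ ^ (p*s - 1) = τ ^ (1:ℝ) * τ ^ (p*s - 1) := by rw [Real.rpow_one]
          _ = τ ^ (1 + (p*s - 1)) := (Real.rpow_add hτ0 _ _).symm
          _ = τ ^ (p*s) := by ring_nf
    _ ≤ c ^ p * τ ^ (p*s) * A := by
          apply mul_le_mul_of_nonneg_left hsum
          positivity
  have hbase0 : 0 ≤ τ * ∑ n ∈ Finset.Icc 1 N,
      |v ((n:ℝ)*τ) - (1/τ) * ∫ t in Set.Ioc (((n:ℝ)-1)*τ) ((n:ℝ)*τ), v t| ^ p := by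
    apply mul_nonneg hτ0.le
    exact Finset.sum_nonneg fun n _ => rpow_nonneg (abs_nonneg _) _
  calc (τ * ∑ n ∈ Finset.Icc 1 N,
      |v ((n:ℝ)*τ) - (1/τ) * ∫ t in Set.Ioc (((n:ℝ)-1)*τ) ((n:ℝ)*τ), v t| ^ p) ^ (1/p)
      ≤ (c ^ p * τ ^ (p*s) * A) ^ (1/p) := rpow_le_rpow hbase0 hLHS (by positivity)
  _ = c * τ ^ s * A ^ (1/p) := by
      rw [Real.mul_rpow (by positivity) hA0,
        Real.mul_rpow (rpow_nonneg hc0.le _) (rpow_nonneg hτ0.le _),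
        ← Real.rpow_mul hc0.le, ← Real.rpow_mul hτ0.le]
      have e1 : p * (1/p) = 1 := by field_simp
      have e2 : (p*s) * (1/p) = s := by field_simp
      rw [e1, e2, Real.rpow_one]
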